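/- Let j : K → L be the inclusion of a sieve of posets (K is a downward closed subposet of L) and let f : K → X be a monotone map of posets. Define Y to be the set (L \ K) ⊔ X with the relation given by the order of L \ K on L \ K, the order of X on X, and, for x ∈ X and y ∈ L \ K, x ≤ y if and only if there exists w ∈ K with x ≤ f(w) in X and w ≤ y in L (and no relations y ≤ x for y ∈ L \ K, x ∈ X). Then this relation is a partial order on Y, the inclusion k : X → Y and the map g : L → Y (given by f on K and the identity on L \ K) are monotone, the square g ∘ j = k ∘ f commutes, and this square is a pushout square in the category of partial orders and monotone maps. -/

import Mathlib

/-!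
Statement 0: the explicit pushout of a sieve inclusion of posets along a monotone
map is a partial order, the structure maps are monotone, the square commutes, and
it is a pushout in the category of partial orders and monotone maps.
-/

universe u v w

/-- A sieve in a poset: a downward closed subset. -/
def IsSieve {α : Type*} [PartialOrder α] (A : Set α) : Prop :=
  ∀ ⦃x y : α⦄, x ≤ y → y ∈ A → x ∈ A

/-- The underlying type `(L \ K) ⊔ X` of the explicit pushout. -/
def PushY {L : Type u} (K : Set L) (X : Type v) : Type (max u v) :=
  {l : L // l ∉ K} ⊕ X

/-- The order relation on the explicit pushout: the orders of `L \ K` and of `X`,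
together with `x ≤ y` (for `x ∈ X`, `y ∈ L \ K`) iff there is `w ∈ K` with
`x ≤ f w` in `X` and `w ≤ y` in `L`. -/
def pushLE {L : Type u} [PartialOrder L] (K : Set L) {X : Type v} [PartialOrder X]
    (f : K → X) : PushY K X → PushY K X → Prop
  | Sum.inl y₁, Sum.inl y₂ => y₁.1 ≤ y₂.1
  | Sum.inl _, Sum.inr _ => False
  | Sum.inr x, Sum.inl y => ∃ w : K, x ≤ f w ∧ (w : L) ≤ y.1
  | Sum.inr x₁, Sum.inr x₂ => x₁ ≤ x₂

open Classical in
/-- The map `g : L → Y`, given by `f` on `K` and the identity on `L \ K`. -/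
noncomputable def pushG {L : Type u} (K : Set L) {X : Type v} (f : K → X) (l : L) :
    PushY K X :=
  if h : l ∈ K then Sum.inr (f ⟨l, h⟩) else Sum.inl ⟨l, h⟩

theorem statement0 {L : Type u} [PartialOrder L] {X : Type v} [PartialOrder X]
    (K : Set L) (hK : IsSieve K) (f : K → X) (hf : Monotone f) :
    -- the relation is a partial order
    IsPartialOrder (PushY K X) (pushLE K f) ∧
    -- the inclusion `k : X → Y` is monotone
    (∀ x₁ x₂ : X, x₁ ≤ x₂ → pushLE K f (Sum.inr x₁) (Sum.inr x₂)) ∧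
    -- the map `g : L → Y` is monotone
    (∀ l₁ l₂ : L, l₁ ≤ l₂ → pushLE K f (pushG K f l₁) (pushG K f l₂)) ∧
    -- the square commutes: `g ∘ j = k ∘ f`
    (∀ w : K, pushG K f (w : L) = Sum.inr (f w)) ∧
    -- the square is a pushout in the category of partial orders and monotone maps
    (∀ (Z : Type w) [PartialOrder Z] (u : L → Z) (v : X → Z),
      Monotone u → Monotone v → (∀ w : K, u (w : L) = v (f w)) →
      ∃! t : PushY K X → Z,
        (∀ a b : PushY K X, pushLE K f a b → t a ≤ t b) ∧
        (∀ l : L, t (pushG K f l) = u l) ∧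
        (∀ x : X, t (Sum.inr x) = v x)) := by
  refine ⟨?_, fun x₁ x₂ h => h, ?_, ?_, ?_⟩
  · refine { refl := ?refl, trans := ?trans, antisymm := ?antisymm }
    case refl =>
      rintro (y | x)
      · exact le_refl y.1
      · exact le_refl x
    case trans =>
      rintro (y₁ | x₁) (y₂ | x₂) (y₃ | x₃) h₁ h₂ <;>
        simp only [pushLE] at *
      · exact h₁.trans h₂
      · obtain ⟨w, hw1, hw2⟩ := h₁
        exact ⟨w, hw1, hw2.trans h₂⟩
      · obtain ⟨w, hw1, hw2⟩ := h₂
        exact ⟨w, h₁.trans hw1, hw2⟩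
      · exact h₁.trans h₂
    case antisymm =>
      rintro (y₁ | x₁) (y₂ | x₂) h₁ h₂ <;> simp only [pushLE] at *
      · exact congrArg Sum.inl (Subtype.ext (le_antisymm h₁ h₂))
      · exact congrArg Sum.inr (le_antisymm h₁ h₂)
  · intro l₁ l₂ h
    unfold pushG
    by_cases h₁ : l₁ ∈ K <;> by_cases h₂ : l₂ ∈ K
    · simp only [h₁, h₂, ↓reduceDIte]
      exact hf h
    · simp only [h₁, h₂, ↓reduceDIte]
      exact ⟨⟨l₁, h₁⟩, le_refl _, h⟩
    · exact absurd (hK h h₂) h₁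
    · simp only [h₁, h₂, ↓reduceDIte]
      exact h
  · intro w
    simp [pushG, w.2]; rfl
  · intro Z _ u v hu hv huv
    refine ⟨Sum.elim (fun y => u y.1) v, ⟨?_, ?_, ?_⟩, ?_⟩
    · rintro (y₁ | x₁) (y₂ | x₂) h <;> simp only [pushLE] at h
      · exact hu h
      · obtain ⟨w, hw1, hw2⟩ := h
        calc v x₁ ≤ v (f w) := hv hw1
          _ = u w := (huv w).symm
          _ ≤ u y₂.1 := hu hw2
      · exact hv h
    · intro l
      unfold pushG
      by_cases h : l ∈ K
      · simp only [h, ↓reduceDIte]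
        exact (huv ⟨l, h⟩).symm
      · simp only [h, ↓reduceDIte]; rfl
    · intro x; rfl
    · rintro t ⟨_, ht2, ht3⟩
      funext a
      rcases a with y | x
      · have := ht2 y.1
        simpa [pushG, y.2] using this
      · exact ht3 x
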